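/- The debiased moment function is doubly robust: under the setup where E[m(W,γ)] = E[α0(X)γ(X)] for all square-integrable γ and θ0 = E[m(W,γ0)], one has E[m(W,γ0) − θ0 + α(X)(Y−γ0(X))] = 0 for every square-integrable α, and E[m(W,γ) − θ0 + α0(X)(Y−γ(X))] = 0 for every square-integrable γ. -/

import Mathlib

open MeasureTheory

lemma integrable_mul_of_memL2 {Ω : Type*} [MeasurableSpace Ω] {μ : Measure Ω}
    {f g : Ω → ℝ} (hf : MemLp f 2 μ) (hg : MemLp g 2 μ) :
    Integrable (fun ω => f ω * g ω) μ := by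
  have h : MemLp (f • g) 1 μ := hg.smul hf
  exact memLp_one_iff_integrable.mp h

/-- Double robustness of the debiased moment function:
`E[m(W,γ₀) − θ₀ + α(X)(Y−γ₀(X))] = 0` for every square-integrable `α`, and
`E[m(W,γ) − θ₀ + α₀(X)(Y−γ(X))] = 0` for every square-integrable `γ`. -/
theorem doubly_robust_moment
    {Ω 𝒳 : Type*} [MeasurableSpace Ω] [MeasurableSpace 𝒳]
    (μ : Measure Ω) [IsProbabilityMeasure μ]
    (Y : Ω → ℝ) (X : Ω → 𝒳)
    (m : Ω → (𝒳 → ℝ) → ℝ)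
    (γ0 α0 : 𝒳 → ℝ)
    (hY : MemLp Y 2 μ)
    (hγ0 : MemLp (fun ω => γ0 (X ω)) 2 μ)
    (hα0 : MemLp (fun ω => α0 (X ω)) 2 μ)
    -- γ0 is the conditional expectation of Y given X:
    (hce : ∀ a : 𝒳 → ℝ, MemLp (fun ω => a (X ω)) 2 μ →
      ∫ ω, a (X ω) * (Y ω - γ0 (X ω)) ∂μ = 0)
    -- Riesz representation: E[m(W,g)] = E[α0(X) g(X)] for all square-integrable g:
    (hRiesz : ∀ g : 𝒳 → ℝ, MemLp (fun ω => g (X ω)) 2 μ →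
      ∫ ω, m ω g ∂μ = ∫ ω, α0 (X ω) * g (X ω) ∂μ)
    (hmγ0 : Integrable (fun ω => m ω γ0) μ)
    (θ0 : ℝ) (hθ0 : θ0 = ∫ ω, m ω γ0 ∂μ) :
    (∀ α : 𝒳 → ℝ, MemLp (fun ω => α (X ω)) 2 μ →
      ∫ ω, (m ω γ0 - θ0 + α (X ω) * (Y ω - γ0 (X ω))) ∂μ = 0) ∧
    (∀ γ : 𝒳 → ℝ, MemLp (fun ω => γ (X ω)) 2 μ →
      Integrable (fun ω => m ω γ) μ →
      ∫ ω, (m ω γ - θ0 + α0 (X ω) * (Y ω - γ (X ω))) ∂μ = 0) := by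
  have hα0Y : Integrable (fun ω => α0 (X ω) * Y ω) μ := integrable_mul_of_memL2 hα0 hY
  have hα0γ0 : Integrable (fun ω => α0 (X ω) * γ0 (X ω)) μ := integrable_mul_of_memL2 hα0 hγ0
  -- From hce with α0: ∫ α0 Y = ∫ α0 γ0
  have key : ∫ ω, α0 (X ω) * Y ω ∂μ = ∫ ω, α0 (X ω) * γ0 (X ω) ∂μ := by
    have h := hce α0 hα0
    have hrw : ∫ ω, α0 (X ω) * (Y ω - γ0 (X ω)) ∂μ
        = ∫ ω, α0 (X ω) * Y ω ∂μ - ∫ ω, α0 (X ω) * γ0 (X ω) ∂μ := by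
      simp_rw [mul_sub]
      exact integral_sub hα0Y hα0γ0
    rw [hrw] at h; linarith
  constructor
  · intro α hα
    have hprod : Integrable (fun ω => α (X ω) * (Y ω - γ0 (X ω))) μ :=
      integrable_mul_of_memL2 hα (hY.sub hγ0)
    have hsub : Integrable (fun ω => m ω γ0 - θ0) μ := hmγ0.sub (integrable_const θ0)
    rw [integral_add hsub hprod,
        integral_sub hmγ0 (integrable_const θ0), hce α hα, integral_const]
    simp [hθ0]
  · intro γ hγ hmγ
    have hα0γ : Integrable (fun ω => α0 (X ω) * γ (X ω)) μ := integrable_mul_of_memL2 hα0 hγ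
    have hprod : Integrable (fun ω => α0 (X ω) * (Y ω - γ (X ω))) μ :=
      integrable_mul_of_memL2 hα0 (hY.sub hγ)
    have hrw : ∫ ω, α0 (X ω) * (Y ω - γ (X ω)) ∂μ
        = ∫ ω, α0 (X ω) * Y ω ∂μ - ∫ ω, α0 (X ω) * γ (X ω) ∂μ := by
      simp_rw [mul_sub]
      exact integral_sub hα0Y hα0γ
    have hsub : Integrable (fun ω => m ω γ - θ0) μ := hmγ.sub (integrable_const θ0)
    rw [integral_add hsub hprod,
        integral_sub hmγ (integrable_const θ0), integral_const, hrw,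
        hRiesz γ hγ, key]
    have : θ0 = ∫ ω, α0 (X ω) * γ0 (X ω) ∂μ := by rw [hθ0, hRiesz γ0 hγ0]
    simp [this]
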